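/- arXiv:1909.12020 — 2 statements merged into one kernel-verified Lean document; each statement's English description precedes it below -/
import Mathlib

section
/- Let p > 0 and ρ > 0. There exist constants C₁, C₂ > 0 (depending only on p, ρ and ‖T*T‖) and ᾱ ∈ (0,1) such that for every α ∈ (0,ᾱ], every w ∈ X with ‖w‖ ≤ ρ, every δ > 0 and every y^δ ∈ Y with ‖y^δ − T x†‖ ≤ δ, where x† = f_p(T*T)w, the regularized solution x_α^δ = g_α(T*T)T*y^δ satisfies ‖x† − x_α^δ‖ ≤ C₁·(−ln α)^{−p} + C₂·δ/√α. -/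
set_option maxHeartbeats 1000000


open ContinuousLinearMap

/-- The generator function `g_α(λ) = 1/(λ + (1 − λ^{√α})²)` with `g_α(0) = 1`,
where `λ^{√α} = exp(√α · log λ)`. -/
noncomputable def genFun (α : ℝ) : ℝ → ℝ := fun t =>
  if t = 0 then 1 else 1 / (t + (1 - Real.exp (Real.sqrt α * Real.log t)) ^ 2)

/-- `f_p(λ) = (−log λ)^{−p}` (with `f_p(0) = 0`, as `(-log 0)^{-p} = 0^{-p} = 0`). -/
noncomputable def fpFun (p : ℝ) : ℝ → ℝ := fun t => (-Real.log t) ^ (-p)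


section Helpers
open Real Filter

lemma exp_neg_one_lt_one : Real.exp (-1) < 1 := by
  rw [← Real.exp_zero]; exact Real.exp_lt_exp.2 (by norm_num)

lemma aux_alpha {α : ℝ} (hα : α ∈ Set.Ioc 0 (Real.exp (-1))) :
    0 < Real.sqrt α ∧ Real.sqrt α ≤ 1 ∧ Real.sqrt α ^ 2 = α ∧ 1 ≤ -Real.log α := by
  obtain ⟨h0, h1⟩ := hα
  have hs : Real.sqrt α ≤ 1 := by
    have h2 : α ≤ 1 := h1.trans exp_neg_one_lt_one.le
    calc Real.sqrt α ≤ Real.sqrt 1 := Real.sqrt_le_sqrt h2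
    _ = 1 := Real.sqrt_one
  have hl : 1 ≤ -Real.log α := by
    have := Real.log_le_log h0 h1
    rw [Real.log_exp] at this
    linarith
  exact ⟨Real.sqrt_pos.2 h0, hs, Real.sq_sqrt h0.le, hl⟩

lemma aux_rpow_exp {x k : ℝ} (hx : 0 ≤ x) (hk : 0 < k) :
    x ^ k ≤ (2*k) ^ k * Real.exp (x/2) := by
  have h1 : x ≤ 2*k * Real.exp (x/(2*k)) := by
    have h := Real.add_one_le_exp (x/(2*k) - 1)
    have h2 : Real.exp (x/(2*k) - 1) ≤ Real.exp (x/(2*k)) := by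
      apply Real.exp_le_exp.2; linarith
    have hk2 : (0:ℝ) < 2*k := by linarith
    calc x = (2*k) * (x/(2*k)) := by field_simp
    _ ≤ (2*k) * Real.exp (x/(2*k) - 1) := by nlinarith
    _ ≤ (2*k) * Real.exp (x/(2*k)) := by nlinarith [Real.exp_pos (x/(2*k))]
  calc x ^ k ≤ (2*k * Real.exp (x/(2*k))) ^ k :=
        Real.rpow_le_rpow hx h1 hk.le
  _ = (2*k) ^ k * (Real.exp (x/(2*k))) ^ k := by
        rw [Real.mul_rpow (by linarith) (Real.exp_pos _).le]
  _ = (2*k) ^ k * Real.exp (x/2) := by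
        rw [← Real.exp_mul]
        congr 1
        field_simp

lemma approx_pointwise {p α t : ℝ} (hp : 0 < p) (hα : α ∈ Set.Ioc 0 (Real.exp (-1)))
    (ht : t ∈ Set.Icc 0 (Real.exp (-1))) :
    |fpFun p t - genFun α t * t * fpFun p t| ≤
      ((2:ℝ)^p + (2*(p+2))^(p+2)) * (-Real.log α)^(-p) := by
  obtain ⟨hβ0, hβ1, hβ2, hM⟩ := aux_alpha hα
  set β := Real.sqrt α with hβ
  set M := -Real.log α with hMdef
  have hM0 : (0:ℝ) < M := lt_of_lt_of_le one_pos hM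
  have hMp : (0:ℝ) ≤ M^(-p) := Real.rpow_nonneg hM0.le _
  have hK0 : (0:ℝ) < (2*(p+2))^(p+2) := Real.rpow_pos_of_pos (by linarith) _
  have h2p : (0:ℝ) < (2:ℝ)^p := Real.rpow_pos_of_pos (by norm_num) _
  rcases eq_or_lt_of_le ht.1 with h0 | h0
  · rw [← h0]
    have hf0 : fpFun p 0 = 0 := by
      simp [fpFun, Real.log_zero, Real.zero_rpow (neg_ne_zero.2 hp.ne')]
    rw [hf0]
    simp only [mul_zero, sub_zero, abs_zero]
    positivity
  · have htne : t ≠ 0 := ne_of_gt h0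
    set L := -Real.log t with hLdef
    have hL : 1 ≤ L := by
      have := Real.log_le_log h0 ht.2
      rw [Real.log_exp] at this
      simp only [hLdef]; linarith
    have hL0 : (0:ℝ) < L := lt_of_lt_of_le one_pos hL
    have hfval : fpFun p t = L^(-p) := rfl
    have hf0 : 0 < fpFun p t := by rw [hfval]; exact Real.rpow_pos_of_pos hL0 _
    have hf1 : fpFun p t ≤ 1 := by
      rw [hfval]; exact Real.rpow_le_one_of_one_le_of_nonpos hL (by linarith)
    rw [genFun, if_neg htne]
    set E := Real.exp (β * Real.log t) with hEdef
    have hE0 : 0 < E := Real.exp_pos _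
    have hE1 : E ≤ 1 := by
      rw [hEdef, ← Real.exp_zero]
      apply Real.exp_le_exp.2
      nlinarith
    set u := (1 - E)^2 with hudef
    have hu0 : (0:ℝ) ≤ u := sq_nonneg _
    set D := t + u with hDdef
    have hDpos : 0 < D := by simp only [hDdef]; linarith
    have htD : t ≤ D := by simp only [hDdef]; linarith
    have huD : u ≤ D := by simp only [hDdef]; linarith
    have hexpr : fpFun p t - 1/D * t * fpFun p t = fpFun p t * (u/D) := by
      field_simp
      ring
    rw [hexpr, abs_of_nonneg (by positivity)]
    rcases le_or_gt (M/2) L with hcase | hcase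
    · -- L ≥ M/2
      have h1 : fpFun p t * (u/D) ≤ fpFun p t := by
        nlinarith [div_le_one_of_le₀ huD hDpos.le]
      have h2 : fpFun p t ≤ (M/2)^(-p) := by
        rw [hfval]
        exact Real.rpow_le_rpow_of_nonpos (by linarith) hcase (by linarith)
      have h3 : (M/2)^(-p) = (2:ℝ)^p * M^(-p) := by
        rw [Real.div_rpow hM0.le (by norm_num), Real.rpow_neg (by norm_num : (0:ℝ) ≤ 2)]
        field_simp
      nlinarith [mul_nonneg hK0.le hMp]
    · -- L < M/2
      have hlogL : Real.log t = -L := by simp [hLdef]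
      have hlogM : Real.log α = -M := by simp [hMdef]
      have hBL : 0 ≤ β * L := by positivity
      have hub : u ≤ (β*L)^2 := by
        have hEeq : E = Real.exp (-(β*L)) := by rw [hEdef, hlogL]; ring_nf
        have hle : 1 - E ≤ β * L := by
          have h := Real.add_one_le_exp (-(β*L))
          rw [hEeq]; linarith
        have h0le : 0 ≤ 1 - E := by linarith
        simp only [hudef]
        exact sq_le_sq' (by linarith) hle
      have htL : t = Real.exp (-L) := by rw [← Real.exp_log h0, hlogL]
      have hαM : α = Real.exp (-M) := by rw [← Real.exp_log hα.1, hlogM]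
      have hkey : M^(p+2) ≤ (2*(p+2))^(p+2) * Real.exp (M/2) := aux_rpow_exp hM0.le (by linarith)
      have hMsplit : M^(p+2) * M^(-p) = M^2 := by
        rw [← Real.rpow_add hM0]
        have he : p + 2 + (-p) = (2:ℝ) := by ring
        rw [he]
        exact Real.rpow_two M
      calc fpFun p t * (u/D) ≤ 1 * (u/t) := by
            apply mul_le_mul hf1 ?_ (by positivity) (by norm_num)
            gcongr
      _ = u/t := one_mul _
      _ ≤ (β*L)^2/t := by gcongr
      _ = L^2 * (Real.exp (-M) * Real.exp L) := by
            rw [mul_pow, hβ2, hαM, htL, Real.exp_neg L]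
            field_simp [Real.exp_ne_zero]
      _ = L^2 * Real.exp (L - M) := by rw [← Real.exp_add]; ring_nf
      _ ≤ (M/2)^2 * Real.exp (-(M/2)) := by
            have h5 : Real.exp (L - M) ≤ Real.exp (-(M/2)) := Real.exp_le_exp.2 (by linarith)
            have h6 : L^2 ≤ (M/2)^2 := by nlinarith
            exact mul_le_mul h6 h5 (Real.exp_pos _).le (by positivity)
      _ ≤ M^2 * Real.exp (-(M/2)) := by nlinarith [Real.exp_pos (-(M/2))]
      _ = M^(p+2) * M^(-p) * Real.exp (-(M/2)) := by rw [hMsplit]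
      _ ≤ ((2*(p+2))^(p+2) * Real.exp (M/2)) * M^(-p) * Real.exp (-(M/2)) := by
            have := Real.exp_pos (-(M/2))
            apply mul_le_mul_of_nonneg_right _ this.le
            exact mul_le_mul_of_nonneg_right hkey hMp
      _ = (2*(p+2))^(p+2) * M^(-p) * (Real.exp (M/2) * Real.exp (-(M/2))) := by ring
      _ = (2*(p+2))^(p+2) * M^(-p) := by rw [← Real.exp_add]; norm_num
      _ ≤ ((2:ℝ)^p + (2*(p+2))^(p+2)) * M^(-p) := by nlinarith [mul_nonneg h2p.le hMp]

lemma aux_exp_conv {β : ℝ} (h0 : 0 ≤ β) (h1 : β ≤ 1) :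
    (1 - Real.exp (-1)) * β ≤ 1 - Real.exp (-β) := by
  have h := convexOn_exp.2 (Set.mem_univ (0:ℝ)) (Set.mem_univ (-1:ℝ))
    (by linarith : (0:ℝ) ≤ 1 - β) h0 (by ring)
  simp only [smul_eq_mul, mul_zero, zero_add, mul_neg, mul_one, Real.exp_zero] at h
  nlinarith [h]

lemma noise_pointwise {α t : ℝ} (hα : α ∈ Set.Ioc 0 (Real.exp (-1)))
    (ht : t ∈ Set.Icc 0 (Real.exp (-1))) :
    |genFun α t * (t * genFun α t)| ≤ 1 / (4 * (1 - Real.exp (-1))^2 * α) := by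
  obtain ⟨hβ0, hβ1, hβ2, hM⟩ := aux_alpha hα
  set β := Real.sqrt α with hβ
  have hc0 : (0:ℝ) < 1 - Real.exp (-1) := by linarith [exp_neg_one_lt_one]
  set c := 1 - Real.exp (-1) with hc
  have hRpos : 0 < 1 / (4 * c^2 * α) :=
    one_div_pos.2 (mul_pos (mul_pos (by norm_num) (pow_pos hc0 2)) hα.1)
  rcases eq_or_lt_of_le ht.1 with h0 | h0
  · rw [← h0]
    simpa using hRpos.le
  · have htne : t ≠ 0 := ne_of_gt h0
    rw [genFun, if_neg htne]
    have hlogt : Real.log t ≤ -1 := by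
      have := Real.log_le_log h0 ht.2
      rwa [Real.log_exp] at this
    have hexp : Real.exp (β * Real.log t) ≤ Real.exp (-β) := by
      apply Real.exp_le_exp.2; nlinarith
    have hexp1 : Real.exp (β * Real.log t) ≤ 1 := by
      rw [← Real.exp_zero]; apply Real.exp_le_exp.2; nlinarith
    have h1 : c * β ≤ 1 - Real.exp (β * Real.log t) := by
      have h2 := aux_exp_conv hβ0.le hβ1
      rw [← hc] at h2
      linarith
    have hcb : 0 ≤ c * β := le_of_lt (mul_pos hc0 hβ0)
    have hsq : (c*β)^2 ≤ (1 - Real.exp (β * Real.log t))^2 :=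
      sq_le_sq' (by linarith) h1
    set D := t + (1 - Real.exp (β * Real.log t)) ^ 2 with hD
    have hDlb : t + c^2 * α ≤ D := by
      have he : (c*β)^2 = c^2 * α := by rw [mul_pow, hβ2]
      simp only [hD]; nlinarith
    have hDpos : 0 < D := lt_of_lt_of_le (by nlinarith [pow_pos hc0 2]) hDlb
    have heq : 1/D * (t * (1/D)) = t / D^2 := by
      field_simp
    rw [heq, abs_of_nonneg (div_nonneg h0.le (sq_nonneg D))]
    rw [div_le_div_iff₀ (pow_pos hDpos 2)
      (mul_pos (mul_pos (by norm_num) (pow_pos hc0 2)) hα.1)]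
    have hm : 0 ≤ c^2 * α := le_of_lt (mul_pos (pow_pos hc0 2) hα.1)
    have hD2 : (t + c^2*α)^2 ≤ D^2 := pow_le_pow_left₀ (by linarith) hDlb 2
    nlinarith [sq_nonneg (t - c^2*α), hD2]

lemma fpFun_contOn {p : ℝ} (hp : 0 < p) {s : Set ℝ} (hs : s ⊆ Set.Icc 0 (Real.exp (-1))) :
    ContinuousOn (fpFun p) s := by
  refine ContinuousOn.mono ?_ hs
  intro t ht
  rcases eq_or_lt_of_le ht.1 with h0 | h0
  · -- t = 0
    rw [← h0]
    apply ContinuousWithinAt.mono _ (Set.Icc_subset_Ici_self (a := Real.exp (-1)))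
    rw [← Set.Ioi_insert, continuousWithinAt_insert_self]
    have hval : fpFun p 0 = 0 := by
      simp [fpFun, Real.log_zero, Real.zero_rpow (neg_ne_zero.2 hp.ne')]
    unfold ContinuousWithinAt
    rw [hval]
    have h1 : Tendsto (fun t : ℝ => -Real.log t) (nhdsWithin 0 (Set.Ioi 0)) atTop :=
      tendsto_neg_atBot_atTop.comp Real.tendsto_log_nhdsGT_zero
    exact (tendsto_rpow_neg_atTop hp).comp h1
  · -- t > 0
    apply ContinuousAt.continuousWithinAt
    have hlog : Real.log t < 0 := Real.log_neg h0 (lt_of_le_of_lt ht.2 (by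
      rw [← Real.exp_zero]; exact Real.exp_lt_exp.2 (by norm_num)))
    exact ((Real.continuousAt_log h0.ne').neg).rpow_const (Or.inl (by show -Real.log t ≠ 0; linarith))

lemma genFun_contOn {α : ℝ} (hα : 0 < α) {s : Set ℝ} (hs : s ⊆ Set.Icc 0 (Real.exp (-1))) :
    ContinuousOn (genFun α) s := by
  have hβ0 : 0 < Real.sqrt α := Real.sqrt_pos.2 hα
  refine ContinuousOn.mono ?_ hs
  intro t ht
  rcases eq_or_lt_of_le ht.1 with h0 | h0
  · rw [← h0]
    apply ContinuousWithinAt.mono _ (Set.Icc_subset_Ici_self (a := Real.exp (-1)))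
    rw [← Set.Ioi_insert, continuousWithinAt_insert_self]
    unfold ContinuousWithinAt
    have hval : genFun α 0 = 1 := by simp [genFun]
    rw [hval]
    have hlog : Tendsto (fun t : ℝ => Real.sqrt α * Real.log t) (nhdsWithin 0 (Set.Ioi 0)) atBot :=
      Tendsto.const_mul_atBot hβ0 Real.tendsto_log_nhdsGT_zero
    have hexp : Tendsto (fun t : ℝ => Real.exp (Real.sqrt α * Real.log t))
        (nhdsWithin 0 (Set.Ioi 0)) (nhds 0) := Real.tendsto_exp_atBot.comp hlog
    have hden : Tendsto (fun t : ℝ => t + (1 - Real.exp (Real.sqrt α * Real.log t)) ^ 2)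
        (nhdsWithin 0 (Set.Ioi 0)) (nhds 1) := by
      have := ((tendsto_const_nhds (x := (1:ℝ))).sub hexp).pow 2
      have h2 := (tendsto_nhdsWithin_of_tendsto_nhds (continuous_id.tendsto 0)).add this
      simpa using h2
    have hmain : Tendsto (fun t : ℝ => 1 / (t + (1 - Real.exp (Real.sqrt α * Real.log t)) ^ 2))
        (nhdsWithin 0 (Set.Ioi 0)) (nhds 1) := by
      have h3 := (tendsto_const_nhds (x := (1:ℝ))).div hden one_ne_zero
      simp only [Pi.div_def, one_div] at h3 ⊢
      simpa using h3
    apply hmain.congr'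
    filter_upwards [self_mem_nhdsWithin] with x hx
    rw [genFun, if_neg (ne_of_gt hx)]
  · apply ContinuousAt.continuousWithinAt
    have hev : (fun s => 1 / (s + (1 - Real.exp (Real.sqrt α * Real.log s)) ^ 2)) =ᶠ[nhds t] genFun α := by
      filter_upwards [eventually_ne_nhds h0.ne'] with x hx
      rw [genFun, if_neg hx]
    apply ContinuousAt.congr _ hev
    have hden : ContinuousAt (fun s : ℝ => s + (1 - Real.exp (Real.sqrt α * Real.log s)) ^ 2) t :=
      continuousAt_id.add
        (((continuousAt_const.sub ((continuousAt_const.mul (Real.continuousAt_log h0.ne')).rexp)).pow 2))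
    exact continuousAt_const.div hden (by positivity)

end Helpers

/-- Let `T : X → Y` be a bounded injective linear operator between complex Hilbert
spaces with `‖T*T‖ ≤ e⁻¹`. Let `p > 0` and `ρ > 0`. There exist constants
`C₁, C₂ > 0` and `ᾱ ∈ (0,1)` such that for every `α ∈ (0,ᾱ]`, every `w` with
`‖w‖ ≤ ρ`, every `δ > 0` and every `y^δ` with `‖y^δ − T x†‖ ≤ δ`, where
`x† = f_p(T*T)w`, the regularized solution `x_α^δ = g_α(T*T)T*y^δ` satisfies
`‖x† − x_α^δ‖ ≤ C₁·(−log α)^{−p} + C₂·δ/√α`. -/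
theorem stmt8 {X Y : Type*} [NormedAddCommGroup X] [InnerProductSpace ℂ X]
    [CompleteSpace X] [NormedAddCommGroup Y] [InnerProductSpace ℂ Y] [CompleteSpace Y]
    (T : X →L[ℂ] Y) (hTinj : Function.Injective T)
    (hTnorm : ‖(adjoint T) ∘L T‖ ≤ Real.exp (-1))
    (p ρ : ℝ) (hp : 0 < p) (hρ : 0 < ρ) :
    ∃ C₁ > (0 : ℝ), ∃ C₂ > (0 : ℝ), ∃ αbar ∈ Set.Ioo (0 : ℝ) 1,
      ∀ α ∈ Set.Ioc (0 : ℝ) αbar, ∀ w : X, ‖w‖ ≤ ρ → ∀ δ > (0 : ℝ), ∀ yδ : Y,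
        ‖yδ - T (cfc (fpFun p) ((adjoint T) ∘L T) w)‖ ≤ δ →
        ‖cfc (fpFun p) ((adjoint T) ∘L T) w -
            cfc (genFun α) ((adjoint T) ∘L T) ((adjoint T) yδ)‖ ≤
          C₁ * (-Real.log α) ^ (-p) + C₂ * δ / Real.sqrt α := by
  set A := adjoint T ∘L T with hAdef
  have hA : IsSelfAdjoint A := by
    rw [IsSelfAdjoint, hAdef, star_eq_adjoint, adjoint_comp, adjoint_adjoint]
  have hpos : (0 : X →L[ℂ] X) ≤ A := by
    rw [nonneg_iff_isPositive]
    simpa [one_def] using isPositive_one.adjoint_conj T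
  have hS : spectrum ℝ A ⊆ Set.Icc 0 (Real.exp (-1)) := by
    intro x hx
    refine ⟨spectrum_nonneg_of_nonneg hpos hx, ?_⟩
    have h : (algebraMap ℝ ℂ x) ∈ spectrum ℂ A := spectrum.algebraMap_mem ℂ hx
    have h' := spectrum.norm_le_norm_mul_of_mem h
    have hone : ‖(1 : X →L[ℂ] X)‖ ≤ 1 := norm_id_le
    have hxabs : |x| ≤ ‖A‖ * 1 := by
      calc |x| = ‖algebraMap ℝ ℂ x‖ := by simp
      _ ≤ ‖A‖ * ‖(1 : X →L[ℂ] X)‖ := h'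
      _ ≤ ‖A‖ * 1 := by
        have := norm_nonneg A
        nlinarith
    have := le_abs_self x
    nlinarith [hTnorm]
  have hc0 : (0:ℝ) < 1 - Real.exp (-1) := by linarith [exp_neg_one_lt_one]
  set K := ((2:ℝ)^p + (2*(p+2))^(p+2)) with hKdef
  have hK0 : 0 < K :=
    add_pos (Real.rpow_pos_of_pos (by norm_num) _) (Real.rpow_pos_of_pos (by linarith) _)
  refine ⟨ρ * K, mul_pos hρ hK0, 1/(2*(1 - Real.exp (-1))), by positivity,
    Real.exp (-1), ⟨Real.exp_pos _, exp_neg_one_lt_one⟩, ?_⟩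
  intro α hα w hw δ hδ yδ hyδ
  obtain ⟨hβ0, hβ1, hβ2, hM1⟩ := aux_alpha hα
  have hM0 : (0:ℝ) < -Real.log α := lt_of_lt_of_le one_pos hM1
  have hMp : (0:ℝ) ≤ (-Real.log α)^(-p) := Real.rpow_nonneg hM0.le _
  -- continuity facts
  have hgc : ContinuousOn (genFun α) (spectrum ℝ A) := genFun_contOn hα.1 hS
  have hfc : ContinuousOn (fpFun p) (spectrum ℝ A) := fpFun_contOn hp hS
  have hidc : ContinuousOn (fun t : ℝ => t) (spectrum ℝ A) := continuous_id.continuousOn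
  set G := cfc (genFun α) A with hGdef
  set F := cfc (fpFun p) A with hFdef
  -- algebraic identities
  have hgid : cfc (fun t : ℝ => genFun α t * t) A = G * A := by
    rw [cfc_mul _ _ A hgc hidc, cfc_id' ℝ A hA]
  have hcomm : cfc (fun t : ℝ => genFun α t * t * fpFun p t) A
      = (G * A) * F := by
    rw [cfc_mul (fun t => genFun α t * t) (fpFun p) A (hgc.mul hidc) hfc, hgid]
  have hsub : cfc (fun t : ℝ => fpFun p t - genFun α t * t * fpFun p t) A
      = F - (G * A) * F := by
    rw [cfc_sub (fpFun p) (fun t => genFun α t * t * fpFun p t) A hfc ((hgc.mul hidc).mul hfc), hcomm]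
  -- decomposition
  set B := G ∘L adjoint T with hBdef
  have hdecomp : F w - G (adjoint T yδ)
      = cfc (fun t : ℝ => fpFun p t - genFun α t * t * fpFun p t) A w
        - B (yδ - T (F w)) := by
    have e3 : B (yδ - T (F w)) = G (adjoint T yδ) - (G * A) (F w) := by
      simp [hBdef, map_sub, mul_apply, comp_apply, hAdef]
    have e4 : cfc (fun t : ℝ => fpFun p t - genFun α t * t * fpFun p t) A w
        = F w - (G * A) (F w) := by
      rw [hsub]
      simp [sub_apply, mul_apply]
    rw [e3, e4]
    abel
  -- bound 1
  have hb1 : ‖cfc (fun t : ℝ => fpFun p t - genFun α t * t * fpFun p t) A‖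
      ≤ K * (-Real.log α)^(-p) := by
    apply norm_cfc_le (by positivity)
    intro x hx
    rw [Real.norm_eq_abs]
    exact approx_pointwise hp hα (hS hx)
  -- bound 2
  have hGsa : IsSelfAdjoint G := IsSelfAdjoint.cfc
  have hBadj : adjoint B = T ∘L G := by
    rw [hBdef, adjoint_comp, adjoint_adjoint, hGsa.adjoint_eq]
  have hBB : B ∘L adjoint B = cfc (fun t : ℝ => genFun α t * (t * genFun α t)) A := by
    rw [hBadj]
    have h5 : cfc (fun t : ℝ => genFun α t * (t * genFun α t)) A
        = G * (A * G) := by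
      rw [cfc_mul (genFun α) (fun t => t * genFun α t) A hgc (hidc.mul hgc), cfc_mul _ _ A hidc hgc, cfc_id' ℝ A hA]
    rw [h5]
    ext x
    simp [hBdef, mul_apply, comp_apply, hAdef]
  have hBB2 : ‖B‖ * ‖B‖ ≤ 1 / (4 * (1 - Real.exp (-1))^2 * α) := by
    have h6 : ‖B ∘L adjoint B‖ = ‖adjoint B‖ * ‖adjoint B‖ := by
      have h := norm_adjoint_comp_self (adjoint B)
      rwa [adjoint_adjoint] at h
    have h7 : ‖adjoint B‖ = ‖B‖ := by
      exact (ContinuousLinearMap.adjoint : (Y →L[ℂ] X) ≃ₗᵢ⋆[ℂ] (X →L[ℂ] Y)).norm_map B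
    have h8 : ‖B ∘L adjoint B‖ ≤ 1 / (4 * (1 - Real.exp (-1))^2 * α) := by
      rw [hBB]
      apply norm_cfc_le
      · have : (0:ℝ) < 4 * (1 - Real.exp (-1))^2 * α :=
          mul_pos (mul_pos (by norm_num) (pow_pos hc0 2)) hα.1
        positivity
      intro x hx
      rw [Real.norm_eq_abs]
      exact noise_pointwise hα (hS hx)
    rw [h6, h7] at h8
    exact h8
  have hsq : (0:ℝ) < Real.sqrt α := hβ0
  have hBnorm : ‖B‖ ≤ 1 / (2 * (1 - Real.exp (-1)) * Real.sqrt α) := by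
    have hR : (1 / (2 * (1 - Real.exp (-1)) * Real.sqrt α)) ^ 2
        = 1 / (4 * (1 - Real.exp (-1))^2 * α) := by
      rw [div_pow, mul_pow, mul_pow, hβ2]
      norm_num
    have hRpos : (0:ℝ) < 1 / (2 * (1 - Real.exp (-1)) * Real.sqrt α) := by positivity
    nlinarith [norm_nonneg B, hBB2]
  -- assemble
  calc ‖F w - G (adjoint T yδ)‖
      = ‖cfc (fun t : ℝ => fpFun p t - genFun α t * t * fpFun p t) A w
          - B (yδ - T (F w))‖ := by rw [hdecomp]
  _ ≤ ‖cfc (fun t : ℝ => fpFun p t - genFun α t * t * fpFun p t) A w‖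
      + ‖B (yδ - T (F w))‖ := norm_sub_le _ _
  _ ≤ (K * (-Real.log α)^(-p)) * ρ
      + (1 / (2 * (1 - Real.exp (-1)) * Real.sqrt α)) * δ := by
    apply add_le_add
    · calc ‖cfc (fun t : ℝ => fpFun p t - genFun α t * t * fpFun p t) A w‖
          ≤ ‖cfc (fun t : ℝ => fpFun p t - genFun α t * t * fpFun p t) A‖ * ‖w‖ :=
            le_opNorm _ _
      _ ≤ (K * (-Real.log α)^(-p)) * ρ := by
        apply mul_le_mul hb1 hw (norm_nonneg _) (by positivity)
    · calc ‖B (yδ - T (F w))‖ ≤ ‖B‖ * ‖yδ - T (F w)‖ := le_opNorm _ _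
      _ ≤ (1 / (2 * (1 - Real.exp (-1)) * Real.sqrt α)) * δ := by
        apply mul_le_mul hBnorm hyδ (norm_nonneg _) (by positivity)
  _ = (ρ * K) * (-Real.log α)^(-p) + (1/(2*(1 - Real.exp (-1)))) * δ / Real.sqrt α := by
    field_simp
end

section
/- Let p > 0, ρ > 0, and let x† = f_p(T*T)w with ‖w‖ ≤ ρ. Then there exist C > 0 and δ̄ > 0 such that for every δ ∈ (0,δ̄], every y^δ ∈ Y with ‖y^δ − T x†‖ ≤ δ, and every α ∈ (0,1) satisfying Θ_p(α) = δ, where Θ_p(λ) = √λ·(ln(1/λ))^{−p}, the regularized solution x(δ) = g_α(T*T)T*y^δ satisfies ‖x† − x(δ)‖ ≤ C·(−ln δ)^{−p}. That is, the new method with the a-priori choice α(δ) = Θ_p^{−1}(δ) is order optimal under logarithmic source conditions. -/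
open ContinuousLinearMap

/-- `Θ_p(λ) = √λ·(log(1/λ))^{−p}`. -/
noncomputable def ThetaP (p lam : ℝ) : ℝ := Real.sqrt lam * Real.log (1 / lam) ^ (-p)

open Real

lemma log_le_div_e {y : ℝ} (hy : 0 < y) : Real.log y ≤ y / Real.exp 1 := by
  have h := Real.add_one_le_exp (Real.log y - 1)
  rw [Real.exp_sub, Real.exp_log hy] at h
  linarith

lemma sqrt_mul_neg_log_le_one {α : ℝ} (h0 : 0 < α) (h1 : α < 1) :
    Real.sqrt α * (-Real.log α) ≤ 1 := by
  set s := Real.sqrt α with hs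
  have hs0 : 0 < s := Real.sqrt_pos.mpr h0
  have hlog : Real.log α = 2 * Real.log s := by
    rw [hs, Real.log_sqrt h0.le]; ring
  have h2 : Real.log (1/s) ≤ (1/s) / Real.exp 1 := log_le_div_e (by positivity)
  have h3 : -Real.log s ≤ 1/(s * Real.exp 1) := by
    rw [Real.log_div one_ne_zero hs0.ne'] at h2
    rw [Real.log_one] at h2
    rw [div_div] at h2
    linarith
  have he : (2:ℝ) ≤ Real.exp 1 := by
    have := Real.add_one_le_exp (1:ℝ); linarith
  have hepos : (0:ℝ) < Real.exp 1 := Real.exp_pos 1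
  calc s * (-Real.log α) = 2 * (s * (-Real.log s)) := by rw [hlog]; ring
    _ ≤ 2 * (s * (1/(s * Real.exp 1))) := by
        apply mul_le_mul_of_nonneg_left _ (by norm_num)
        exact mul_le_mul_of_nonneg_left h3 hs0.le
    _ = 2 / Real.exp 1 := by field_simp
    _ ≤ 1 := by rw [div_le_one hepos]; linarith

section gen
variable {α t : ℝ}

lemma den_ge (ht : 0 < t) :
    t ≤ t + (1 - Real.exp (Real.sqrt α * Real.log t)) ^ 2 := by
  nlinarith [sq_nonneg (1 - Real.exp (Real.sqrt α * Real.log t))]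

lemma genFun_eq (ht : 0 < t) :
    genFun α t = 1 / (t + (1 - Real.exp (Real.sqrt α * Real.log t)) ^ 2) := by
  simp [genFun, ht.ne']

lemma genFun_nonneg (ht : 0 ≤ t) : 0 ≤ genFun α t := by
  rcases eq_or_lt_of_le ht with h | h
  · simp [genFun, ← h]
  · rw [genFun_eq h]
    have := den_ge (α := α) h
    positivity

lemma mul_genFun_le_one (ht : 0 ≤ t) : t * genFun α t ≤ 1 := by
  rcases eq_or_lt_of_le ht with h | h
  · simp [← h]
  · rw [genFun_eq h]
    rw [mul_one_div, div_le_one (lt_of_lt_of_le h (den_ge h))]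
    exact den_ge h

lemma genFun_le_inv (ht : 0 < t) : genFun α t ≤ 1 / t := by
  rw [genFun_eq ht]
  exact one_div_le_one_div_of_le ht (den_ge ht)

/-- Key bound: `g_α(t) ≤ e²/α` on `[0, e⁻¹]` for `α ∈ (0, e⁻¹]`. -/
lemma genFun_le (hα : 0 < α) (hα1 : α ≤ Real.exp (-1)) (ht : 0 ≤ t) :
    genFun α t ≤ Real.exp 1 ^ 2 / α := by
  have hαlt1 : α < 1 := lt_of_le_of_lt hα1 (by
    rw [Real.exp_lt_one_iff]; norm_num)
  have he : (1:ℝ) ≤ Real.exp 1 ^ 2 := one_le_pow₀ (by linarith [Real.add_one_le_exp (1:ℝ)])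
  rcases eq_or_lt_of_le ht with h | h
  · rw [← h]
    simp only [genFun, if_pos rfl, if_true]
    rw [le_div_iff₀ hα]
    nlinarith
  rcases le_or_gt α t with hat | hat
  · calc genFun α t ≤ 1 / t := genFun_le_inv h
      _ ≤ 1 / α := one_div_le_one_div_of_le hα hat
      _ ≤ Real.exp 1 ^ 2 / α := by
          gcongr
  · -- t < α : the denominator is at least α/e²
    have hs0 : 0 < Real.sqrt α := Real.sqrt_pos.mpr hα
    have hL1 : 1 ≤ -Real.log α := by
      have h' : Real.log α ≤ -1 := by
        calc Real.log α ≤ Real.log (Real.exp (-1)) := Real.log_le_log hα hα1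
          _ = -1 := Real.log_exp _
      linarith
    have hx1 : Real.sqrt α * (-Real.log α) ≤ 1 := sqrt_mul_neg_log_le_one hα hαlt1
    set x := Real.sqrt α * (-Real.log α) with hxdef
    have hx0 : 0 < x := mul_pos hs0 (by linarith)
    -- 1 - exp (√α log α) ≥ x e^{-x} ≥ x e^{-1} ≥ √α e^{-1}
    have key : Real.sqrt α * Real.exp (-1) ≤ 1 - Real.exp (Real.sqrt α * Real.log α) := by
      have h1 : Real.sqrt α * Real.log α = -x := by rw [hxdef]; ring
      rw [h1]
      have h2 := Real.add_one_le_exp x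
      have h3 : Real.exp (-x) * (x + 1) ≤ 1 := by
        have hinv : Real.exp (-x) * Real.exp x = 1 := by rw [← Real.exp_add]; simp
        nlinarith [mul_le_mul_of_nonneg_left h2 (Real.exp_pos (-x)).le]
      have h4 : Real.exp (-1) ≤ Real.exp (-x) := Real.exp_le_exp.mpr (by linarith)
      have h5 : x * Real.exp (-x) ≤ 1 - Real.exp (-x) := by nlinarith [Real.exp_pos (-x)]
      have h6 : Real.sqrt α * Real.exp (-1) ≤ x * Real.exp (-x) := by
        have : Real.sqrt α ≤ x := by
          calc Real.sqrt α = Real.sqrt α * 1 := by ring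
            _ ≤ x := by rw [hxdef]; apply mul_le_mul_of_nonneg_left hL1 hs0.le
        calc Real.sqrt α * Real.exp (-1) ≤ Real.sqrt α * Real.exp (-x) :=
              mul_le_mul_of_nonneg_left h4 hs0.le
          _ ≤ x * Real.exp (-x) := mul_le_mul_of_nonneg_right this (Real.exp_pos _).le
      linarith
    -- and since t < α, 1 - exp(√α log t) ≥ 1 - exp(√α log α)
    have mono : 1 - Real.exp (Real.sqrt α * Real.log α)
        ≤ 1 - Real.exp (Real.sqrt α * Real.log t) := by
      have : Real.log t ≤ Real.log α := Real.log_le_log h hat.le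
      have : Real.sqrt α * Real.log t ≤ Real.sqrt α * Real.log α :=
        mul_le_mul_of_nonneg_left this hs0.le
      have := Real.exp_le_exp.mpr this
      linarith
    have hbase : Real.sqrt α * Real.exp (-1) ≤ 1 - Real.exp (Real.sqrt α * Real.log t) :=
      key.trans mono
    have hden : α * Real.exp (-1) ^ 2 ≤ t + (1 - Real.exp (Real.sqrt α * Real.log t)) ^ 2 := by
      have hsq : (Real.sqrt α * Real.exp (-1)) ^ 2
          ≤ (1 - Real.exp (Real.sqrt α * Real.log t)) ^ 2 := by
        apply pow_le_pow_left₀ (by positivity) hbase 2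
      have : (Real.sqrt α * Real.exp (-1)) ^ 2 = α * Real.exp (-1) ^ 2 := by
        rw [mul_pow, Real.sq_sqrt hα.le]
      nlinarith
    rw [genFun_eq h]
    have hd0 : 0 < α * Real.exp (-1) ^ 2 := by positivity
    calc 1 / (t + (1 - Real.exp (Real.sqrt α * Real.log t)) ^ 2)
        ≤ 1 / (α * Real.exp (-1) ^ 2) := one_div_le_one_div_of_le hd0 hden
      _ = Real.exp 1 ^ 2 / α := by
          have hinv : Real.exp (-1) * Real.exp 1 = 1 := by rw [← Real.exp_add]; simp
          have h2 : Real.exp (-1) ^ 2 * Real.exp 1 ^ 2 = 1 := by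
            rw [← mul_pow, hinv, one_pow]
          have h4 : Real.exp 2 = Real.exp 1 ^ 2 := by
            rw [show (2:ℝ) = 1 + 1 by norm_num, Real.exp_add]; ring
          field_simp
          nlinarith [Real.exp_pos 1, Real.exp_pos (-1)]

end gen

lemma one_le_neg_log {t : ℝ} (ht : 0 < t) (hta : t ≤ Real.exp (-1)) :
    1 ≤ -Real.log t := by
  have h' : Real.log t ≤ -1 := by
    calc Real.log t ≤ Real.log (Real.exp (-1)) := Real.log_le_log ht hta
      _ = -1 := Real.log_exp _
  linarith

lemma mul_genFun_sq_le {α t : ℝ} (hα : 0 < α) (hα1 : α ≤ Real.exp (-1)) (ht : 0 ≤ t) :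
    t * genFun α t ^ 2 ≤ Real.exp 1 ^ 2 / α := by
  have h1 := mul_genFun_le_one (α := α) ht
  have h2 := genFun_nonneg (α := α) ht
  have h3 := genFun_le hα hα1 ht
  calc t * genFun α t ^ 2 = (t * genFun α t) * genFun α t := by ring
    _ ≤ 1 * genFun α t := mul_le_mul_of_nonneg_right h1 h2
    _ = genFun α t := one_mul _
    _ ≤ _ := h3

lemma sqrt_eq_exp_half_log {α : ℝ} (hα : 0 < α) :
    Real.sqrt α = Real.exp (Real.log α / 2) := by
  have h : Real.exp (Real.log α / 2) ^ 2 = α := by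
    rw [← Real.exp_nat_mul, Real.exp_eq_exp.mpr (by push_cast; ring : ((2:ℕ):ℝ) * (Real.log α / 2) = Real.log α)]
    exact Real.exp_log hα
  conv_lhs => rw [← h]
  exact Real.sqrt_sq (Real.exp_pos _).le

/-- Key: `√α · L² ≤ (2n)ⁿ · L^(−p)` where `L = −log α ≥ 1` and `n = ⌈p⌉ + 2`. -/
lemma sqrt_mul_sq_le {α p : ℝ} (hp : 0 < p) (hα : 0 < α) (hL1 : 1 ≤ -Real.log α) :
    Real.sqrt α * (-Real.log α) ^ 2
      ≤ (2 * ((⌈p⌉₊ : ℝ) + 2)) ^ (⌈p⌉₊ + 2) * (-Real.log α) ^ (-p) := by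
  set L := -Real.log α with hLdef
  have hL0 : (0:ℝ) < L := by linarith
  set n : ℕ := ⌈p⌉₊ + 2 with hn
  set c : ℝ := 2 * ((⌈p⌉₊ : ℝ) + 2) with hc
  have hc0 : (0:ℝ) < c := by positivity
  have hcn : c = 2 * (n : ℝ) := by rw [hc, hn]; push_cast; ring
  have e1 : L ^ (p + 2) * L ^ (-p) = L ^ 2 := by
    rw [← Real.rpow_add hL0, show p + 2 + -p = (2:ℝ) by ring, Real.rpow_two]
  have e2 : L ^ (p + 2) ≤ L ^ ((n : ℝ)) := by
    apply Real.rpow_le_rpow_of_exponent_le hL1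
    have := Nat.le_ceil p
    rw [hn]; push_cast; linarith
  have e2' : L ^ ((n : ℝ)) = L ^ n := Real.rpow_natCast L n
  have base : L ≤ c * Real.exp (L / c) := by
    have h := Real.add_one_le_exp (L / c)
    have : L / c ≤ Real.exp (L / c) := by linarith
    calc L = c * (L / c) := by field_simp
      _ ≤ c * Real.exp (L / c) := mul_le_mul_of_nonneg_left this hc0.le
  have e3 : Real.sqrt α * L ^ n ≤ c ^ n := by
    have hLn : L ^ n ≤ (c * Real.exp (L / c)) ^ n := pow_le_pow_left₀ hL0.le base n
    have hxp : (c * Real.exp (L / c)) ^ n = c ^ n * Real.exp ((n : ℝ) * (L / c)) := by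
      rw [mul_pow, Real.exp_nat_mul]
    have hsqrt : Real.sqrt α = Real.exp (-(L/2)) := by
      rw [sqrt_eq_exp_half_log hα, hLdef]; ring_nf
    have hcne : (n : ℝ) * (L / c) = L / 2 := by
      have hn0 : (n:ℝ) ≠ 0 := Nat.cast_ne_zero.mpr (by omega)
      rw [hcn, mul_div_assoc', mul_comm 2 (n:ℝ), mul_div_mul_left _ _ hn0]
    calc Real.sqrt α * L ^ n ≤ Real.exp (-(L/2)) * (c ^ n * Real.exp (L / 2)) := by
          rw [hsqrt]
          apply mul_le_mul_of_nonneg_left _ (Real.exp_pos _).le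
          rw [← hcne]; rw [← hxp]; exact hLn
      _ = c ^ n * (Real.exp (-(L/2)) * Real.exp (L/2)) := by ring
      _ = c ^ n := by rw [← Real.exp_add]; simp
  have hrp : (0:ℝ) ≤ L ^ (-p) := Real.rpow_nonneg hL0.le _
  calc Real.sqrt α * L ^ 2 = Real.sqrt α * L ^ (p + 2) * L ^ (-p) := by
        rw [mul_assoc, e1]
    _ ≤ Real.sqrt α * L ^ n * L ^ (-p) := by
        apply mul_le_mul_of_nonneg_right _ hrp
        rw [← e2']
        exact mul_le_mul_of_nonneg_left e2 (Real.sqrt_nonneg _)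
    _ ≤ c ^ n * L ^ (-p) := mul_le_mul_of_nonneg_right e3 hrp

lemma fpFun_nonneg {p t : ℝ} (ht : 0 ≤ t) (hta : t ≤ Real.exp (-1)) :
    0 ≤ fpFun p t := by
  rcases eq_or_lt_of_le ht with h | h
  · simp [fpFun, ← h, Real.zero_rpow]
    positivity
  · exact Real.rpow_nonneg (by linarith [one_le_neg_log h hta]) _

/-- The bias bound: `|(1 − t·g_α(t))·f_p(t)| ≤ K·(−log α)^(−p)` on `[0, e⁻¹]`. -/
lemma bias_bound {α t p : ℝ} (hp : 0 < p) (hα : 0 < α) (hα1 : α ≤ Real.exp (-1))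
    (ht : 0 ≤ t) (hta : t ≤ Real.exp (-1)) :
    |fpFun p t - genFun α t * t * fpFun p t| ≤
      ((2:ℝ) ^ p + (2 * ((⌈p⌉₊ : ℝ) + 2)) ^ (⌈p⌉₊ + 2)) * (-Real.log α) ^ (-p) := by
  have hαlt1 : α < 1 := lt_of_le_of_lt hα1 (by rw [Real.exp_lt_one_iff]; norm_num)
  have hL1 : 1 ≤ -Real.log α := one_le_neg_log hα hα1
  have hL0 : (0:ℝ) < -Real.log α := by linarith
  have hLp : (0:ℝ) ≤ (-Real.log α) ^ (-p) := Real.rpow_nonneg hL0.le _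
  have h2p : (0:ℝ) ≤ (2:ℝ) ^ p := Real.rpow_nonneg (by norm_num) _
  have hNp : (0:ℝ) ≤ (2 * ((⌈p⌉₊ : ℝ) + 2)) ^ (⌈p⌉₊ + 2) := by positivity
  have hfp0 : 0 ≤ fpFun p t := fpFun_nonneg ht hta
  have hr0 : 0 ≤ 1 - t * genFun α t := by linarith [mul_genFun_le_one (α := α) ht]
  have habs : |fpFun p t - genFun α t * t * fpFun p t|
      = (1 - t * genFun α t) * fpFun p t := by
    rw [abs_of_nonneg (by nlinarith)]
    ring
  rw [habs]
  rcases eq_or_lt_of_le ht with h | h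
  · have : fpFun p t = 0 := by
      simp [fpFun, ← h, Real.zero_rpow (show -p ≠ 0 by linarith)]
    rw [this, mul_zero]
    positivity
  have hlogt1 : 1 ≤ -Real.log t := one_le_neg_log h hta
  have hfple1 : fpFun p t ≤ 1 :=
    Real.rpow_le_one_of_one_le_of_nonpos hlogt1 (by linarith)
  have hsqrtpos : 0 < Real.sqrt α := Real.sqrt_pos.mpr hα
  rcases le_or_gt t (Real.sqrt α) with hts | hts
  · -- t ≤ √α : use f_p(t) ≤ f_p(√α) = 2^p L^(-p)
    have hr1 : 1 - t * genFun α t ≤ 1 := by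
      have h1 := genFun_nonneg (α := α) ht
      nlinarith
    have hmono : -Real.log α / 2 ≤ -Real.log t := by
      have := Real.log_le_log h hts
      rw [Real.log_sqrt hα.le] at this
      linarith
    have hLhalf : (0:ℝ) < -Real.log α / 2 := by linarith
    have hfp2 : fpFun p t ≤ (-Real.log α / 2) ^ (-p) :=
      Real.rpow_le_rpow_of_nonpos hLhalf hmono (by linarith)
    have heq : (-Real.log α / 2 : ℝ) ^ (-p) = (2:ℝ) ^ p * (-Real.log α) ^ (-p) := by
      rw [Real.div_rpow hL0.le (by norm_num : (0:ℝ) ≤ 2),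
        Real.rpow_neg (by norm_num : (0:ℝ) ≤ 2)]
      rw [div_eq_mul_inv, inv_inv]
      ring
    calc (1 - t * genFun α t) * fpFun p t ≤ 1 * fpFun p t :=
          mul_le_mul_of_nonneg_right hr1 hfp0
      _ = fpFun p t := one_mul _
      _ ≤ (2:ℝ) ^ p * (-Real.log α) ^ (-p) := by rw [← heq]; exact hfp2
      _ ≤ _ := by nlinarith
  · -- √α < t : use 1 - t g(t) ≤ √α L²
    have hden := den_ge (α := α) h
    have hdpos : 0 < t + (1 - Real.exp (Real.sqrt α * Real.log t)) ^ 2 :=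
      lt_of_lt_of_le h hden
    have hg_eq : 1 - t * genFun α t =
        (1 - Real.exp (Real.sqrt α * Real.log t)) ^ 2
          / (t + (1 - Real.exp (Real.sqrt α * Real.log t)) ^ 2) := by
      rw [genFun_eq h]
      field_simp
      ring
    have h1e : 0 ≤ 1 - Real.exp (Real.sqrt α * Real.log t) := by
      have hlt : Real.log t < 0 := by linarith
      have : Real.sqrt α * Real.log t ≤ 0 := by nlinarith
      have := Real.exp_le_one_iff.mpr this
      linarith
    have h2e : 1 - Real.exp (Real.sqrt α * Real.log t) ≤ Real.sqrt α * (-Real.log t) := by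
      have := Real.add_one_le_exp (Real.sqrt α * Real.log t)
      nlinarith
    have h3e : Real.sqrt α * (-Real.log t) ≤ Real.sqrt α * (-Real.log α) := by
      apply mul_le_mul_of_nonneg_left _ hsqrtpos.le
      have h4 := Real.log_le_log hsqrtpos hts.le
      rw [Real.log_sqrt hα.le] at h4
      linarith
    have hsq : (1 - Real.exp (Real.sqrt α * Real.log t)) ^ 2
        ≤ (Real.sqrt α * (-Real.log α)) ^ 2 :=
      pow_le_pow_left₀ h1e (h2e.trans h3e) 2
    have hub : 1 - t * genFun α t ≤ Real.sqrt α * (-Real.log α) ^ 2 := by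
      rw [hg_eq]
      calc (1 - Real.exp (Real.sqrt α * Real.log t)) ^ 2
            / (t + (1 - Real.exp (Real.sqrt α * Real.log t)) ^ 2)
          ≤ (1 - Real.exp (Real.sqrt α * Real.log t)) ^ 2 / t :=
            div_le_div_of_nonneg_left (by positivity) h hden
        _ ≤ (Real.sqrt α * (-Real.log α)) ^ 2 / t := by
            gcongr
        _ ≤ (Real.sqrt α * (-Real.log α)) ^ 2 / Real.sqrt α := by
            apply div_le_div_of_nonneg_left (by positivity) hsqrtpos hts.le
        _ = Real.sqrt α * (-Real.log α) ^ 2 := by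
            rw [mul_pow, Real.sq_sqrt hα.le, div_eq_iff hsqrtpos.ne']
            linear_combination (-Real.log α)^2 * (Real.mul_self_sqrt hα.le).symm
    have hkey := sqrt_mul_sq_le hp hα hL1
    calc (1 - t * genFun α t) * fpFun p t
        ≤ (1 - t * genFun α t) * 1 := mul_le_mul_of_nonneg_left hfple1 hr0
      _ = 1 - t * genFun α t := mul_one _
      _ ≤ Real.sqrt α * (-Real.log α) ^ 2 := hub
      _ ≤ (2 * ((⌈p⌉₊ : ℝ) + 2)) ^ (⌈p⌉₊ + 2) * (-Real.log α) ^ (-p) := hkey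
      _ ≤ _ := by nlinarith

lemma alpha_le_of_theta_le {p α : ℝ} (hp : 0 < p) (h0 : 0 < α) (h1 : α < 1)
    (h : ThetaP p α ≤ Real.exp (-1)) : α ≤ Real.exp (-1) := by
  by_contra hc
  push_neg at hc
  have hlogpos : 0 < Real.log (1/α) := Real.log_pos (by rw [lt_div_iff₀ h0]; linarith)
  have hinvlt : 1/α < Real.exp 1 := by
    rw [div_lt_iff₀ h0]
    have h3 : Real.exp 1 * Real.exp (-1) = 1 := by rw [← Real.exp_add]; simp
    calc (1:ℝ) = Real.exp 1 * Real.exp (-1) := h3.symm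
      _ < Real.exp 1 * α := by
          apply mul_lt_mul_of_pos_left hc (Real.exp_pos 1)
  have hloglt : Real.log (1/α) < 1 := by
    have := Real.log_lt_log (by positivity) hinvlt
    rwa [Real.log_exp] at this
  have hfac : 1 ≤ Real.log (1/α) ^ (-p) := by
    have := Real.rpow_le_rpow_of_nonpos hlogpos hloglt.le (by linarith : -p ≤ 0)
    rwa [Real.one_rpow] at this
  have hsq : Real.sqrt (Real.exp (-1)) < Real.sqrt α :=
    Real.sqrt_lt_sqrt (Real.exp_pos _).le hc
  have hself : Real.exp (-1) ≤ Real.sqrt (Real.exp (-1)) := by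
    rw [Real.le_sqrt (Real.exp_pos _).le (Real.exp_pos _).le]
    have hx1 : Real.exp (-1) ≤ 1 := Real.exp_le_one_iff.mpr (by norm_num)
    nlinarith [Real.exp_pos (-1)]
  have : Real.exp (-1) < ThetaP p α := by
    calc Real.exp (-1) ≤ Real.sqrt (Real.exp (-1)) := hself
      _ < Real.sqrt α := hsq
      _ = Real.sqrt α * 1 := (mul_one _).symm
      _ ≤ Real.sqrt α * Real.log (1/α) ^ (-p) :=
          mul_le_mul_of_nonneg_left hfac (Real.sqrt_nonneg _)
      _ = ThetaP p α := rfl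
  linarith

lemma neg_log_theta {p α : ℝ} (hp : 0 < p) (hα : 0 < α) (hαa : α ≤ Real.exp (-1)) :
    0 < -Real.log (ThetaP p α) ∧
      -Real.log (ThetaP p α) ≤ (1/2 + p) * (-Real.log α) := by
  have hL1 : 1 ≤ -Real.log α := one_le_neg_log hα hαa
  have hL0 : (0:ℝ) < -Real.log α := by linarith
  have hlog1α : Real.log (1/α) = -Real.log α := by
    rw [one_div, Real.log_inv]
  have hrppos : 0 < Real.log (1/α) ^ (-p) := by
    rw [hlog1α]; exact Real.rpow_pos_of_pos hL0 _
  have hsq : 0 < Real.sqrt α := Real.sqrt_pos.mpr hα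
  have hlogT : Real.log (ThetaP p α) =
      Real.log α / 2 + (-p) * Real.log (-Real.log α) := by
    unfold ThetaP
    rw [Real.log_mul hsq.ne' hrppos.ne', Real.log_sqrt hα.le, hlog1α,
      Real.log_rpow hL0]
  have hlogL : 0 ≤ Real.log (-Real.log α) := Real.log_nonneg hL1
  have hlogL2 : Real.log (-Real.log α) ≤ -Real.log α := by
    have := Real.log_le_sub_one_of_pos hL0
    linarith
  constructor
  · rw [hlogT]; nlinarith
  · rw [hlogT]; nlinarith

lemma Lp_le_final {p α : ℝ} (hp : 0 < p) (hα : 0 < α) (hαa : α ≤ Real.exp (-1)) :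
    (-Real.log α) ^ (-p) ≤ (1/2 + p) ^ p * (-Real.log (ThetaP p α)) ^ (-p) := by
  obtain ⟨hD0, hDle⟩ := neg_log_theta hp hα hαa
  have hL1 : 1 ≤ -Real.log α := one_le_neg_log hα hαa
  have hL0 : (0:ℝ) < -Real.log α := by linarith
  have hc0 : (0:ℝ) < 1/2 + p := by linarith
  have h1 : ((1/2 + p) * (-Real.log α)) ^ (-p) ≤ (-Real.log (ThetaP p α)) ^ (-p) :=
    Real.rpow_le_rpow_of_nonpos hD0 hDle (by linarith)
  have h2 : ((1/2 + p) * (-Real.log α)) ^ (-p)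
      = (1/2 + p) ^ (-p) * (-Real.log α) ^ (-p) :=
    Real.mul_rpow hc0.le hL0.le
  have h3 : (1/2 + p : ℝ) ^ p * (1/2 + p : ℝ) ^ (-p) = 1 := by
    rw [← Real.rpow_add hc0]; simp
  calc (-Real.log α) ^ (-p)
      = (1/2 + p) ^ p * ((1/2 + p) ^ (-p) * (-Real.log α) ^ (-p)) := by
        rw [← mul_assoc, h3, one_mul]
    _ = (1/2 + p) ^ p * ((1/2 + p) * (-Real.log α)) ^ (-p) := by rw [h2]
    _ ≤ (1/2 + p) ^ p * (-Real.log (ThetaP p α)) ^ (-p) := by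
        apply mul_le_mul_of_nonneg_left h1 (Real.rpow_nonneg hc0.le _)

lemma contOn_fpFun {p : ℝ} (hp : 0 < p) :
    ContinuousOn (fpFun p) (Set.Icc 0 (Real.exp (-1))) := by
  have ha0 : (0:ℝ) ≤ Real.exp (-1) := (Real.exp_pos _).le
  rw [← Set.Ioc_insert_left ha0]
  intro t ht
  rcases Set.mem_insert_iff.mp ht with h0 | hIoc
  · -- t = 0
    subst h0
    rw [ContinuousWithinAt, nhdsWithin_insert]
    apply Filter.Tendsto.sup (tendsto_pure_nhds _ _)
    have hfp0 : fpFun p 0 = 0 := by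
      simp [fpFun, Real.zero_rpow (show -p ≠ 0 by linarith)]
    rw [hfp0]
    have h1 : Filter.Tendsto Real.log (nhdsWithin 0 (Set.Ioc 0 (Real.exp (-1)))) Filter.atBot :=
      Real.tendsto_log_nhdsGT_zero.mono_left
        (nhdsWithin_mono 0 Set.Ioc_subset_Ioi_self)
    have h2 : Filter.Tendsto (fun t => -Real.log t)
        (nhdsWithin 0 (Set.Ioc 0 (Real.exp (-1)))) Filter.atTop :=
      Filter.tendsto_neg_atBot_atTop.comp h1
    exact (tendsto_rpow_neg_atTop hp).comp h2
  · -- t > 0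
    apply ContinuousAt.continuousWithinAt
    have ht0 : t ≠ 0 := (hIoc.1).ne'
    have h1 : ContinuousAt (fun u => -Real.log u) t := (Real.continuousAt_log ht0).neg
    apply ContinuousAt.rpow_const h1
    left
    have := one_le_neg_log hIoc.1 hIoc.2
    intro hcon
    rw [hcon] at this
    linarith

lemma contOn_genFun {α : ℝ} (hα : 0 < α) :
    ContinuousOn (genFun α) (Set.Icc 0 (Real.exp (-1))) := by
  have ha0 : (0:ℝ) ≤ Real.exp (-1) := (Real.exp_pos _).le
  have hs0 : 0 < Real.sqrt α := Real.sqrt_pos.mpr hα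
  rw [← Set.Ioc_insert_left ha0]
  intro t ht
  rcases Set.mem_insert_iff.mp ht with h0 | hIoc
  · subst h0
    rw [ContinuousWithinAt, nhdsWithin_insert]
    apply Filter.Tendsto.sup (tendsto_pure_nhds _ _)
    have hgen0 : genFun α 0 = 1 := by simp [genFun]
    rw [hgen0]
    have h1 : Filter.Tendsto Real.log (nhdsWithin 0 (Set.Ioc 0 (Real.exp (-1)))) Filter.atBot :=
      Real.tendsto_log_nhdsGT_zero.mono_left
        (nhdsWithin_mono 0 Set.Ioc_subset_Ioi_self)
    have h2 : Filter.Tendsto (fun t => Real.sqrt α * Real.log t)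
        (nhdsWithin 0 (Set.Ioc 0 (Real.exp (-1)))) Filter.atBot :=
      h1.const_mul_atBot hs0
    have h3 : Filter.Tendsto (fun t => Real.exp (Real.sqrt α * Real.log t))
        (nhdsWithin 0 (Set.Ioc 0 (Real.exp (-1)))) (nhds 0) :=
      Real.tendsto_exp_atBot.comp h2
    have h4 : Filter.Tendsto (fun t : ℝ => t)
        (nhdsWithin 0 (Set.Ioc 0 (Real.exp (-1)))) (nhds 0) :=
      Filter.Tendsto.mono_left Filter.tendsto_id nhdsWithin_le_nhds
    have h5 : Filter.Tendsto
        (fun t => 1 / (t + (1 - Real.exp (Real.sqrt α * Real.log t)) ^ 2))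
        (nhdsWithin 0 (Set.Ioc 0 (Real.exp (-1)))) (nhds 1) := by
      have hden : Filter.Tendsto
          (fun t => t + (1 - Real.exp (Real.sqrt α * Real.log t)) ^ 2)
          (nhdsWithin 0 (Set.Ioc 0 (Real.exp (-1)))) (nhds 1) := by
        have := h4.add (((tendsto_const_nhds (x := (1:ℝ))).sub h3).pow 2)
        norm_num at this
        exact this
      have := (tendsto_const_nhds (x := (1:ℝ))).div hden one_ne_zero
      norm_num at this
      exact this
    apply h5.congr'
    filter_upwards [self_mem_nhdsWithin] with u hu
    rw [genFun, if_neg hu.1.ne']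
  · apply ContinuousAt.continuousWithinAt
    have ht0 : t ≠ 0 := (hIoc.1).ne'
    have hev : (fun u => 1 / (u + (1 - Real.exp (Real.sqrt α * Real.log u)) ^ 2))
        =ᶠ[nhds t] genFun α := by
      filter_upwards [eventually_ne_nhds ht0] with u hu
      rw [genFun, if_neg hu]
    apply ContinuousAt.congr _ hev
    have hden : ContinuousAt
        (fun u => u + (1 - Real.exp (Real.sqrt α * Real.log u)) ^ 2) t := by
      apply ContinuousAt.add continuousAt_id
      apply ContinuousAt.pow
      apply ContinuousAt.sub continuousAt_const
      exact Real.continuous_exp.continuousAt.comp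
        (continuousAt_const.mul (Real.continuousAt_log ht0))
    apply ContinuousAt.div continuousAt_const hden
    exact (lt_of_lt_of_le hIoc.1 (den_ge hIoc.1)).ne'


set_option maxHeartbeats 2000000 in
/-- Let `p > 0`, `ρ > 0`, and let `x† = f_p(T*T)w` with `‖w‖ ≤ ρ`. Then there exist
`C > 0` and `δ̄ > 0` such that for every `δ ∈ (0,δ̄]`, every `y^δ` with
`‖y^δ − T x†‖ ≤ δ`, and every `α ∈ (0,1)` satisfying `Θ_p(α) = δ`, the regularized
solution `x(δ) = g_α(T*T)T*y^δ` satisfies `‖x† − x(δ)‖ ≤ C·(−log δ)^{−p}`: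
the new method with the a-priori choice `α(δ) = Θ_p⁻¹(δ)` is order optimal under
logarithmic source conditions. -/
theorem stmt9 {X Y : Type*} [NormedAddCommGroup X] [InnerProductSpace ℂ X]
    [CompleteSpace X] [NormedAddCommGroup Y] [InnerProductSpace ℂ Y] [CompleteSpace Y]
    (T : X →L[ℂ] Y) (hTinj : Function.Injective T)
    (hTnorm : ‖(adjoint T) ∘L T‖ ≤ Real.exp (-1))
    (p ρ : ℝ) (hp : 0 < p) (hρ : 0 < ρ)
    (w : X) (hw : ‖w‖ ≤ ρ) (xdag : X) (hxdag : xdag = cfc (fpFun p) ((adjoint T) ∘L T) w) :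
    ∃ C > (0 : ℝ), ∃ δbar > (0 : ℝ), ∀ δ ∈ Set.Ioc (0 : ℝ) δbar, ∀ yδ : Y,
      ‖yδ - T xdag‖ ≤ δ → ∀ α ∈ Set.Ioo (0 : ℝ) 1, ThetaP p α = δ →
        ‖xdag - cfc (genFun α) ((adjoint T) ∘L T) ((adjoint T) yδ)‖ ≤
          C * (-Real.log δ) ^ (-p) := by
  classical
  set K : ℝ := (2:ℝ) ^ p + (2 * ((⌈p⌉₊ : ℝ) + 2)) ^ (⌈p⌉₊ + 2) with hK
  have hKpos : 0 < K := by
    have : (0:ℝ) < (2:ℝ) ^ p := Real.rpow_pos_of_pos (by norm_num) _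
    have h2 : (0:ℝ) < (2 * ((⌈p⌉₊ : ℝ) + 2)) ^ (⌈p⌉₊ + 2) := by positivity
    rw [hK]; linarith
  have hcp : (0:ℝ) < (1/2 + p : ℝ) ^ p := Real.rpow_pos_of_pos (by linarith) _
  refine ⟨(K * ρ + Real.exp 1) * (1/2 + p) ^ p, by positivity, Real.exp (-1),
    Real.exp_pos _, ?_⟩
  intro δ hδ yδ hyδ α hα hΘ
  -- basic facts about δ and α
  have hδ0 : 0 < δ := hδ.1
  have hαa : α ≤ Real.exp (-1) := alpha_le_of_theta_le hp hα.1 hα.2 (hΘ ▸ hδ.2)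
  have hα0 : 0 < α := hα.1
  have hL1 : 1 ≤ -Real.log α := one_le_neg_log hα0 hαa
  have hL0 : (0:ℝ) < -Real.log α := by linarith
  have hLpn : (0:ℝ) ≤ (-Real.log α) ^ (-p) := Real.rpow_nonneg hL0.le _
  have hδlog : 0 < -Real.log δ := by
    rw [← hΘ]; exact (neg_log_theta hp hα0 hαa).1
  have hfinal : (-Real.log α) ^ (-p) ≤ (1/2 + p) ^ p * (-Real.log δ) ^ (-p) := by
    rw [← hΘ]; exact Lp_le_final hp hα0 hαa
  have hδlogp : (0:ℝ) ≤ (-Real.log δ) ^ (-p) := Real.rpow_nonneg hδlog.le _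
  rcases subsingleton_or_nontrivial X with hX | hX
  · have : xdag - cfc (genFun α) ((adjoint T) ∘L T) ((adjoint T) yδ) = 0 :=
      Subsingleton.elim _ _
    rw [this, norm_zero]
    positivity
  -- operator setup
  set A := (adjoint T) ∘L T with hAdef
  have hA : IsSelfAdjoint A := by
    rw [ContinuousLinearMap.isSelfAdjoint_iff', hAdef, adjoint_comp, adjoint_adjoint]
  have hApos : A.IsPositive := by
    have := ContinuousLinearMap.isPositive_one (E := Y) (𝕜 := ℂ)
    have h2 := this.adjoint_conj T
    simpa [ContinuousLinearMap.one_def] using h2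
  have hAnn : (0 : X →L[ℂ] X) ≤ A :=
    (ContinuousLinearMap.nonneg_iff_isPositive A).mpr hApos
  have hspec : spectrum ℝ A ⊆ Set.Icc 0 (Real.exp (-1)) := by
    intro μ hμ
    refine ⟨spectrum_nonneg_of_nonneg hAnn hμ, ?_⟩
    have h1 : ‖μ‖ ≤ ‖A‖ := spectrum.norm_le_norm_of_mem hμ
    calc μ ≤ |μ| := le_abs_self μ
      _ ≤ ‖A‖ := h1
      _ ≤ Real.exp (-1) := hTnorm
  -- continuity facts
  have hg : ContinuousOn (genFun α) (spectrum ℝ A) := (contOn_genFun hα0).mono hspec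
  have hfpc : ContinuousOn (fpFun p) (spectrum ℝ A) := (contOn_fpFun hp).mono hspec
  have hid : ContinuousOn (fun t : ℝ => t) (spectrum ℝ A) := continuousOn_id
  -- decomposition
  set e := yδ - T xdag with hedef
  have hTy : (adjoint T) yδ = (adjoint T) e + A xdag := by
    rw [hedef, map_sub]
    simp [hAdef, ContinuousLinearMap.comp_apply]
  have hgid : cfc (fun t => genFun α t * t) A = cfc (genFun α) A * A := by
    rw [cfc_mul _ _ A hg hid, cfc_id' ℝ A]
  have hsplit : xdag - cfc (genFun α) A ((adjoint T) yδ) =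
      cfc (fun t => fpFun p t - genFun α t * t * fpFun p t) A w
        - cfc (genFun α) A ((adjoint T) e) := by
    rw [hTy, map_add]
    have h1 : cfc (genFun α) A (A xdag) =
        cfc (fun t => genFun α t * t * fpFun p t) A w := by
      have h2 : cfc (genFun α) A (A xdag) = (cfc (genFun α) A * A) xdag := rfl
      rw [h2, ← hgid, hxdag]
      have h3 : cfc (fun t => genFun α t * t) A (cfc (fpFun p) A w)
          = (cfc (fun t => genFun α t * t) A * cfc (fpFun p) A) w := rfl
      rw [h3, ← cfc_mul (fun t => genFun α t * t) _ A (hg.mul hid) hfpc]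
    rw [h1]
    have h4 : cfc (fun t => fpFun p t - genFun α t * t * fpFun p t) A w
        = cfc (fpFun p) A w - cfc (fun t => genFun α t * t * fpFun p t) A w := by
      rw [cfc_sub (fpFun p) (fun t => genFun α t * t * fpFun p t) A hfpc ((hg.mul hid).mul hfpc)]
      simp [ContinuousLinearMap.sub_apply]
    rw [h4, ← hxdag]
    abel
  rw [hsplit]
  -- term estimates
  have hterm1 : ‖cfc (fun t => fpFun p t - genFun α t * t * fpFun p t) A w‖
      ≤ K * (-Real.log α) ^ (-p) * ρ := by
    calc ‖cfc (fun t => fpFun p t - genFun α t * t * fpFun p t) A w‖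
        ≤ ‖cfc (fun t => fpFun p t - genFun α t * t * fpFun p t) A‖ * ‖w‖ :=
          ContinuousLinearMap.le_opNorm _ _
      _ ≤ (K * (-Real.log α) ^ (-p)) * ρ := by
          apply mul_le_mul _ hw (norm_nonneg _) (by positivity)
          apply norm_cfc_le (by positivity)
          intro x hx
          have hx' := hspec hx
          exact bias_bound hp hα0 hαa hx'.1 hx'.2
  have hterm2 : ‖cfc (genFun α) A ((adjoint T) e)‖ ≤ Real.exp 1 * (-Real.log α) ^ (-p) := by
    set B := cfc (genFun α) A ∘L adjoint T with hBdef
    set B' := T ∘L cfc (genFun α) A with hB'def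
    have hgsa : IsSelfAdjoint (cfc (genFun α) A) := cfc_predicate _ _
    have hadj : adjoint B' = B := by
      rw [hB'def, adjoint_comp, ContinuousLinearMap.isSelfAdjoint_iff'.mp hgsa, hBdef]
    have hBnorm : ‖B‖ = ‖B'‖ := by
      rw [← hadj]
      exact ContinuousLinearMap.adjoint.norm_map B'
    have hcomp : adjoint B' ∘L B' = cfc (fun t => genFun α t * (t * genFun α t)) A := by
      have hm : cfc (fun t => genFun α t * (t * genFun α t)) A
          = cfc (genFun α) A * (A * cfc (genFun α) A) := by
        rw [cfc_mul (genFun α) (fun t => t * genFun α t) A hg (hid.mul hg), cfc_mul _ _ A hid hg, cfc_id' ℝ A]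
      rw [hm, hadj]
      ext x
      simp [hBdef, hB'def, ContinuousLinearMap.mul_apply, ContinuousLinearMap.comp_apply, hAdef]
    have hBsq : ‖B‖ * ‖B‖ ≤ Real.exp 1 ^ 2 / α := by
      rw [hBnorm, ← norm_adjoint_comp_self B', hcomp]
      apply norm_cfc_le (by positivity)
      intro x hx
      have hx' := hspec hx
      have habs : |genFun α x * (x * genFun α x)| = x * genFun α x ^ 2 := by
        rw [abs_of_nonneg]
        · ring
        · have := genFun_nonneg (α := α) hx'.1
          exact mul_nonneg this (mul_nonneg hx'.1 this)
      rw [Real.norm_eq_abs, habs]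
      exact mul_genFun_sq_le hα0 hαa hx'.1
    have hBle : ‖B‖ ≤ Real.exp 1 / Real.sqrt α := by
      have h0 : ‖B‖ ≤ Real.sqrt (Real.exp 1 ^ 2 / α) := by
        rw [Real.le_sqrt (norm_nonneg _) (by positivity)]
        nlinarith
      rwa [Real.sqrt_div (by positivity) α, Real.sqrt_sq (Real.exp_pos _).le] at h0
    have happ : ‖cfc (genFun α) A ((adjoint T) e)‖ = ‖B e‖ := by
      rw [hBdef]; rfl
    rw [happ]
    calc ‖B e‖ ≤ ‖B‖ * ‖e‖ := ContinuousLinearMap.le_opNorm _ _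
      _ ≤ (Real.exp 1 / Real.sqrt α) * δ := by
          apply mul_le_mul hBle hyδ (norm_nonneg _) (by positivity)
      _ = Real.exp 1 * (-Real.log α) ^ (-p) := by
          rw [← hΘ]
          unfold ThetaP
          rw [one_div, Real.log_inv]
          have hs : Real.sqrt α ≠ 0 := (Real.sqrt_pos.mpr hα0).ne'
          field_simp
  calc ‖cfc (fun t => fpFun p t - genFun α t * t * fpFun p t) A w
        - cfc (genFun α) A ((adjoint T) e)‖
      ≤ ‖cfc (fun t => fpFun p t - genFun α t * t * fpFun p t) A w‖
        + ‖cfc (genFun α) A ((adjoint T) e)‖ := norm_sub_le _ _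
    _ ≤ K * (-Real.log α) ^ (-p) * ρ + Real.exp 1 * (-Real.log α) ^ (-p) := by
        linarith
    _ = (K * ρ + Real.exp 1) * (-Real.log α) ^ (-p) := by ring
    _ ≤ (K * ρ + Real.exp 1) * ((1/2 + p) ^ p * (-Real.log δ) ^ (-p)) := by
        apply mul_le_mul_of_nonneg_left hfinal
        positivity
    _ = (K * ρ + Real.exp 1) * (1/2 + p) ^ p * (-Real.log δ) ^ (-p) := by ring
end
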